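/- Let Γ be a finite graph, v₀ ∈ V(Γ), S ⊆ E(Γ), and q ∈ C⁰(Γ,ℚ) with |q| ∈ ℤ. If the set B^{v₀}_{Γ∖S}(q) of v₀-quasistable 0-cochains on Γ∖S with respect to q is nonempty, then the graph Γ∖S is connected. -/

import Mathlib

open Finset

variable {V E : Type}

/-- Number of edges in `F` joining a vertex of `A` with a vertex of `B`. -/
def valS [DecidableEq V] [DecidableEq E] (ends : E → V × V) (F : Finset E)
    (A B : Finset V) : ℕ :=
  (F.filter (fun e => ((ends e).1 ∈ A ∧ (ends e).2 ∈ B) ∨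
    ((ends e).1 ∈ B ∧ (ends e).2 ∈ A))).card

/-- Number of edges of the graph joining `A` and `B`. -/
def valAB [Fintype E] [DecidableEq V] [DecidableEq E] (ends : E → V × V)
    (A B : Finset V) : ℕ :=
  valS ends Finset.univ A B

/-- Number of edges of `F` with both endpoints in `W` (loops included). -/
def insideE [DecidableEq V] [DecidableEq E] (ends : E → V × V) (W : Finset V)
    (F : Finset E) : ℕ :=
  (F.filter (fun e => (ends e).1 ∈ W ∧ (ends e).2 ∈ W)).card

/-- The Laplacian of the graph with vertex set `V` and edge set `F`. -/
def lapF [Fintype V] [Fintype E] [DecidableEq V] [DecidableEq E] (ends : E → V × V)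
    (F : Finset E) (d : V → ℤ) (v : V) : ℤ :=
  -d v * (valS ends F {v} {v}ᶜ : ℤ) +
    ∑ w ∈ Finset.univ.erase v, d w * (valS ends F {v} {w} : ℤ)

/-- Characteristic 0-cochain of a set of vertices. -/
def chi [DecidableEq V] (A : Finset V) (v : V) : ℤ := if v ∈ A then 1 else 0

/-- Reachability using edges belonging to `F`. -/
def Reaches (ends : E → V × V) (F : Finset E) (u v : V) : Prop :=
  Relation.ReflTransGen (fun a b => ∃ e ∈ F, ends e = (a, b) ∨ ends e = (b, a)) u v

/-- Connectedness of the graph with vertex set `V` and edge set `F`. -/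
def ConnF (ends : E → V × V) (F : Finset E) : Prop :=
  ∀ u v : V, Reaches ends F u v

/-- Complexity: the number of spanning trees using edges from `F`
(a spanning tree is a connected spanning subgraph with `|V| - 1` edges). -/
noncomputable def complexity [Fintype V] (ends : E → V × V) (F : Finset E) : ℕ :=
  {T : Finset E | T ⊆ F ∧ ConnF ends T ∧ T.card = Fintype.card V - 1}.ncard

/-- The quantity η(d, W) = -d_W - |S ∩ E(Γ[W])| + q_W - val(W)/2. -/
def eta [Fintype V] [Fintype E] [DecidableEq V] [DecidableEq E]
    (ends : E → V × V) (S : Finset E) (q : V → ℚ) (d : V → ℤ) (W : Finset V) : ℚ :=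
  -(∑ w ∈ W, (d w : ℚ)) - (insideE ends W S : ℚ) + (∑ w ∈ W, q w)
    - (valAB ends W Wᶜ : ℚ) / 2

/-- The quantity ε(d, W) = d_W + |S ∩ E(Γ[W])| - q_W - val(W)/2 + val_S(W). -/
def eps [Fintype V] [Fintype E] [DecidableEq V] [DecidableEq E]
    (ends : E → V × V) (S : Finset E) (q : V → ℚ) (d : V → ℤ) (W : Finset V) : ℚ :=
  (∑ w ∈ W, (d w : ℚ)) + (insideE ends W S : ℚ) - (∑ w ∈ W, q w)
    - (valAB ends W Wᶜ : ℚ) / 2 + (valS ends S W Wᶜ : ℚ)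

/-- A 0-cochain `d` is semistable on Γ∖S with respect to `q`. -/
def Semistable [Fintype V] [Fintype E] [DecidableEq V] [DecidableEq E]
    (ends : E → V × V) (S : Finset E) (q : V → ℚ) (d : V → ℤ) : Prop :=
  ((∑ v, d v : ℤ) : ℚ) = (∑ v, q v) - S.card ∧
  ∀ W : Finset V, W ≠ Finset.univ →
    (∑ w ∈ W, (d w : ℚ)) + (insideE ends W S : ℚ) ≥
      (∑ w ∈ W, q w) - (valAB ends W Wᶜ : ℚ) / 2

/-- A 0-cochain `d` is `v₀`-quasistable on Γ∖S with respect to `q`. -/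
def Quasistable [Fintype V] [Fintype E] [DecidableEq V] [DecidableEq E]
    (ends : E → V × V) (S : Finset E) (q : V → ℚ) (v₀ : V) (d : V → ℤ) : Prop :=
  Semistable ends S q d ∧
  ∀ W : Finset V, W ≠ Finset.univ → v₀ ∈ W →
    (∑ w ∈ W, (d w : ℚ)) + (insideE ends W S : ℚ) >
      (∑ w ∈ W, q w) - (valAB ends W Wᶜ : ℚ) / 2

/-- Connectedness of the subgraph induced on `A`. -/
def ConnOn (ends : E → V × V) (A : Finset V) : Prop :=
  ∀ u ∈ A, ∀ v ∈ A,
    Relation.ReflTransGen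
      (fun a b => a ∈ A ∧ b ∈ A ∧ ∃ e : E, ends e = (a, b) ∨ ends e = (b, a)) u v

/-- `C` is a connected component of the subgraph induced on `A`. -/
def IsCompOf [DecidableEq V] (ends : E → V × V) (C A : Finset V) : Prop :=
  C.Nonempty ∧ C ⊆ A ∧ ConnOn ends C ∧
  ∀ e : E, ¬ (((ends e).1 ∈ C ∧ (ends e).2 ∈ A \ C) ∨
    ((ends e).1 ∈ A \ C ∧ (ends e).2 ∈ C))

/-- An edge is a bridge (separating node) if removing it disconnects the graph. -/
def Bridge [Fintype E] [DecidableEq E] (ends : E → V × V) (e : E) : Prop :=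
  ¬ ConnF ends (Finset.univ.erase e)

/-- `e` is a boundary edge of `W`: it joins `W` with its complement. -/
def Boundary (ends : E → V × V) (W : Finset V) (e : E) : Prop :=
  ((ends e).1 ∈ W ∧ (ends e).2 ∉ W) ∨ ((ends e).1 ∉ W ∧ (ends e).2 ∈ W)

/-- `W` is a spine: all of its boundary edges are bridges (separating nodes). -/
def Spine [Fintype E] [DecidableEq E] (ends : E → V × V) (W : Finset V) : Prop :=
  ∀ e : E, Boundary ends W e → Bridge ends e

/-- The polarization `q` is integral at the subcurve `W`: for every connected
component `C` of `W` and of `Wᶜ`, the number q_C - δ_C/2 is an integer. -/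
def IntegralAt [Fintype V] [Fintype E] [DecidableEq V] [DecidableEq E]
    (ends : E → V × V) (q : V → ℚ) (W : Finset V) : Prop :=
  ∀ C : Finset V, (IsCompOf ends C W ∨ IsCompOf ends C Wᶜ) →
    ∃ n : ℤ, (∑ w ∈ C, q w) - (valAB ends C Cᶜ : ℚ) / 2 = (n : ℚ)

/-- The polarization `q` is general: not integral at any proper subcurve. -/
def GeneralPol [Fintype V] [Fintype E] [DecidableEq V] [DecidableEq E]
    (ends : E → V × V) (q : V → ℚ) : Prop :=
  ∀ W : Finset V, W.Nonempty → W ≠ Finset.univ → ¬ IntegralAt ends q W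

/-- The polarization `q` is non-degenerate: not integral at any proper subcurve
which is not a spine. -/
def NonDegPol [Fintype V] [Fintype E] [DecidableEq V] [DecidableEq E]
    (ends : E → V × V) (q : V → ℚ) : Prop :=
  ∀ W : Finset V, W.Nonempty → W ≠ Finset.univ → ¬ Spine ends W →
    ¬ IntegralAt ends q W

/-- A line bundle of multidegree `d` is `q`-semistable. -/
def SemistableLB [Fintype V] [Fintype E] [DecidableEq V] [DecidableEq E]
    (ends : E → V × V) (q : V → ℚ) (d : V → ℤ) : Prop :=
  ((∑ v, d v : ℤ) : ℚ) = (∑ v, q v) ∧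
  ∀ W : Finset V, W ≠ Finset.univ →
    ((∑ w ∈ W, d w : ℤ) : ℚ) ≥ (∑ w ∈ W, q w) - (valAB ends W Wᶜ : ℚ) / 2


/-- if there exists a v₀-quasistable 0-cochain on Γ∖S then Γ∖S is connected. -/
theorem stmt7 [Fintype V] [Fintype E] [DecidableEq V] [DecidableEq E] (ends : E → V × V) (S : Finset E) (q : V → ℚ) (qz : ℤ)
    (hq : ∑ v, q v = (qz : ℚ)) (v₀ : V) (d : V → ℤ)
    (h : Quasistable ends S q v₀ d) :
    ConnF ends (Finset.univ \ S) := by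
  classical
  suffices h₀ : ∀ x, Reaches ends (Finset.univ \ S) v₀ x by
    intro u v
    have hsymm : Symmetric (fun a b : V =>
        ∃ e ∈ Finset.univ \ S, ends e = (a, b) ∨ ends e = (b, a)) := by
      rintro a b ⟨e, he, hor⟩
      exact ⟨e, he, hor.symm⟩
    exact ((@Relation.ReflTransGen.symmetric _ _ ⟨hsymm⟩).symm _ _ (h₀ u)).trans (h₀ v)
  by_contra hx
  push_neg at hx
  obtain ⟨x, hxr⟩ := hx
  set W : Finset V :=
    Finset.univ.filter (fun w => Reaches ends (Finset.univ \ S) v₀ w) with hWdef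
  have hclosed : ∀ a b, a ∈ W →
      (∃ e ∈ Finset.univ \ S, ends e = (a, b) ∨ ends e = (b, a)) → b ∈ W := by
    intro a b ha hstep
    simp only [hWdef, Finset.mem_filter, Finset.mem_univ, true_and] at ha ⊢
    exact ha.tail hstep
  have hv₀ : v₀ ∈ W := by
    simp only [hWdef, Finset.mem_filter, Finset.mem_univ, true_and]
    exact Relation.ReflTransGen.refl
  have hWne : W ≠ Finset.univ := by
    intro hW
    have : x ∈ W := hW ▸ Finset.mem_univ x
    simp only [hWdef, Finset.mem_filter, Finset.mem_univ, true_and] at this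
    exact hxr this
  have hWcne : Wᶜ ≠ Finset.univ := by
    intro hW
    have : v₀ ∈ Wᶜ := hW ▸ Finset.mem_univ v₀
    exact (Finset.mem_compl.mp this) hv₀
  -- every crossing edge lies in S
  have hcross : ∀ e, (((ends e).1 ∈ W ∧ (ends e).2 ∈ Wᶜ) ∨
      ((ends e).1 ∈ Wᶜ ∧ (ends e).2 ∈ W)) → e ∈ S := by
    intro e he
    by_contra heS
    have hmem : e ∈ Finset.univ \ S := by simp [heS]
    rcases he with ⟨h1, h2⟩ | ⟨h1, h2⟩
    · exact (Finset.mem_compl.mp h2) (hclosed _ _ h1 ⟨e, hmem, Or.inl rfl⟩)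
    · exact (Finset.mem_compl.mp h1) (hclosed _ _ h2 ⟨e, hmem, Or.inr rfl⟩)
  have hval : valAB ends W Wᶜ = valS ends S W Wᶜ := by
    unfold valAB valS
    congr 1
    ext e
    simp only [Finset.mem_filter, Finset.mem_univ, true_and]
    exact ⟨fun hp => ⟨hcross e hp, hp⟩, fun hp => hp.2⟩
  have hvalsymm : valAB ends Wᶜ W = valAB ends W Wᶜ := by
    unfold valAB valS
    congr 1
    ext e
    simp only [Finset.mem_filter]
    tauto
  -- cardinality bound
  have hcard : insideE ends W S + insideE ends Wᶜ S + valS ends S W Wᶜ ≤ S.card := by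
    unfold insideE valS
    set A := S.filter (fun e => (ends e).1 ∈ W ∧ (ends e).2 ∈ W) with hA
    set B := S.filter (fun e => (ends e).1 ∈ Wᶜ ∧ (ends e).2 ∈ Wᶜ) with hB
    set C := S.filter (fun e => ((ends e).1 ∈ W ∧ (ends e).2 ∈ Wᶜ) ∨
      ((ends e).1 ∈ Wᶜ ∧ (ends e).2 ∈ W)) with hC
    have hAB : Disjoint A B := by
      rw [Finset.disjoint_left]
      intro e heA heB
      simp only [hA, hB, Finset.mem_filter, Finset.mem_compl] at heA heB
      exact heB.2.1 heA.2.1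
    have hABC : Disjoint (A ∪ B) C := by
      rw [Finset.disjoint_left]
      intro e heAB heC
      simp only [hA, hB, hC, Finset.mem_union, Finset.mem_filter,
        Finset.mem_compl] at heAB heC
      tauto
    calc A.card + B.card + C.card
        = (A ∪ B).card + C.card := by rw [Finset.card_union_of_disjoint hAB]
      _ = ((A ∪ B) ∪ C).card := (Finset.card_union_of_disjoint hABC).symm
      _ ≤ S.card := Finset.card_le_card (by
          apply Finset.union_subset
          · exact Finset.union_subset (Finset.filter_subset _ _) (Finset.filter_subset _ _)
          · exact Finset.filter_subset _ _)
  obtain ⟨⟨hdeg, hss⟩, hqs⟩ := h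
  have h1 := hqs W hWne hv₀
  have h2 := hss Wᶜ hWcne
  rw [compl_compl, hvalsymm] at h2
  have hsumd : (∑ w ∈ W, (d w : ℚ)) + (∑ w ∈ Wᶜ, (d w : ℚ)) = ((∑ v, d v : ℤ) : ℚ) := by
    push_cast
    exact Finset.sum_add_sum_compl W _
  have hsumq : (∑ w ∈ W, q w) + (∑ w ∈ Wᶜ, q w) = ∑ v, q v :=
    Finset.sum_add_sum_compl W _
  have hcardQ : ((insideE ends W S : ℚ) + (insideE ends Wᶜ S : ℚ)
      + (valS ends S W Wᶜ : ℚ)) ≤ (S.card : ℚ) := by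
    exact_mod_cast hcard
  rw [hval] at h1 h2
  linarith
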